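/- Let L: ℝ^{m×n} → ℝ be differentiable, μ-strongly convex (μ > 0) and M-smooth, with minimizer W* and minimum value L* = L(W*). Let ε ∈ [0,1), C₁ ≥ 0, and let the step size h > 0 satisfy C₁h² + (M/2)(2h + C₁h²)² ≤ (h(1−ε))/2 and (1−ε)μh ≤ 1. Suppose the sequence (W_t)_{t∈ℕ} in ℝ^{m×n} satisfies, for every t, W_{t+1} = W_t − h∇L(W_t) + hR_t + E_t for some matrices R_t, E_t with ⟨R_t, ∇L(W_t)⟩ ≤ ε‖∇L(W_t)‖_F², ‖R_t‖_F ≤ ‖∇L(W_t)‖_F, and ‖E_t‖_F ≤ C₁h²‖∇L(W_t)‖_F. Then for all t ∈ ℕ, L(W_t) − L* ≤ (1 − (1−ε)μh)^t · (L(W_0) − L*). -/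

import Mathlib

open Matrix

/-- Frobenius norm of a real matrix. -/
noncomputable def frobNorm {m n : ℕ} (A : Matrix (Fin m) (Fin n) ℝ) : ℝ :=
  Real.sqrt (∑ i, ∑ j, (A i j) ^ 2)

/-- Frobenius (trace) inner product of two real matrices. -/
def frobInner {m n : ℕ} (A B : Matrix (Fin m) (Fin n) ℝ) : ℝ :=
  ∑ i, ∑ j, A i j * B i j

open scoped RealInnerProductSpace

namespace PGLC

noncomputable def toE {m n : ℕ} (A : Matrix (Fin m) (Fin n) ℝ) :
    EuclideanSpace ℝ (Fin m × Fin n) := WithLp.toLp 2 (fun p : Fin m × Fin n => A p.1 p.2)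

lemma toE_add {m n : ℕ} (A B : Matrix (Fin m) (Fin n) ℝ) :
    toE (A + B) = toE A + toE B := rfl
lemma toE_sub {m n : ℕ} (A B : Matrix (Fin m) (Fin n) ℝ) :
    toE (A - B) = toE A - toE B := rfl
lemma toE_smul {m n : ℕ} (c : ℝ) (A : Matrix (Fin m) (Fin n) ℝ) :
    toE (c • A) = c • toE A := rfl

lemma toE_neg {m n : ℕ} (A : Matrix (Fin m) (Fin n) ℝ) : toE (-A) = - toE A := rfl

lemma frobNorm_eq {m n : ℕ} (A : Matrix (Fin m) (Fin n) ℝ) : frobNorm A = ‖toE A‖ := by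
  rw [EuclideanSpace.norm_eq, frobNorm]
  congr 1
  rw [Fintype.sum_prod_type]
  simp [toE, Real.norm_eq_abs, sq_abs]

lemma frobInner_eq {m n : ℕ} (A B : Matrix (Fin m) (Fin n) ℝ) :
    frobInner A B = ⟪toE A, toE B⟫ := by
  rw [frobInner]
  simp only [PiLp.inner_apply, RCLike.inner_apply, starRingEnd_apply, star_trivial]
  rw [Fintype.sum_prod_type]
  exact Finset.sum_congr rfl fun i _ => Finset.sum_congr rfl fun j _ => mul_comm _ _


lemma frobNorm_nonneg {m n : ℕ} (A : Matrix (Fin m) (Fin n) ℝ) : 0 ≤ frobNorm A := by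
  rw [frobNorm_eq]; exact norm_nonneg _

lemma frob_CS {m n : ℕ} (A B : Matrix (Fin m) (Fin n) ℝ) :
    frobInner A B ≤ frobNorm A * frobNorm B := by
  rw [frobInner_eq, frobNorm_eq, frobNorm_eq]; exact real_inner_le_norm _ _

lemma frobNorm_smul {m n : ℕ} (c : ℝ) (A : Matrix (Fin m) (Fin n) ℝ) :
    frobNorm (c • A) = |c| * frobNorm A := by
  rw [frobNorm_eq, frobNorm_eq, toE_smul, norm_smul, Real.norm_eq_abs]

lemma frobNorm_add_le {m n : ℕ} (A B : Matrix (Fin m) (Fin n) ℝ) :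
    frobNorm (A + B) ≤ frobNorm A + frobNorm B := by
  rw [frobNorm_eq, frobNorm_eq, frobNorm_eq, toE_add]; exact norm_add_le _ _

lemma frobInner_sub_left {m n : ℕ} (A B C : Matrix (Fin m) (Fin n) ℝ) :
    frobInner (A - B) C = frobInner A C - frobInner B C := by
  rw [frobInner_eq, frobInner_eq, frobInner_eq, toE_sub, inner_sub_left]

lemma frobInner_add_right {m n : ℕ} (A B C : Matrix (Fin m) (Fin n) ℝ) :
    frobInner A (B + C) = frobInner A B + frobInner A C := by
  rw [frobInner_eq, frobInner_eq, frobInner_eq, toE_add, inner_add_right]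

lemma frobInner_sub_right {m n : ℕ} (A B C : Matrix (Fin m) (Fin n) ℝ) :
    frobInner A (B - C) = frobInner A B - frobInner A C := by
  rw [frobInner_eq, frobInner_eq, frobInner_eq, toE_sub, inner_sub_right]

lemma frobInner_smul_right {m n : ℕ} (c : ℝ) (A B : Matrix (Fin m) (Fin n) ℝ) :
    frobInner A (c • B) = c * frobInner A B := by
  rw [frobInner_eq, frobInner_eq, toE_smul, real_inner_smul_right]

lemma frobNorm_neg {m n : ℕ} (A : Matrix (Fin m) (Fin n) ℝ) :
    frobNorm (-A) = frobNorm A := by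
  rw [frobNorm_eq, frobNorm_eq, toE_neg, norm_neg]

lemma frobInner_neg_right {m n : ℕ} (A B : Matrix (Fin m) (Fin n) ℝ) :
    frobInner A (-B) = -frobInner A B := by
  rw [frobInner_eq, frobInner_eq, toE_neg, inner_neg_right]

lemma frobInner_comm {m n : ℕ} (A B : Matrix (Fin m) (Fin n) ℝ) :
    frobInner A B = frobInner B A := by
  rw [frobInner_eq, frobInner_eq, real_inner_comm]

lemma frobInner_self {m n : ℕ} (A : Matrix (Fin m) (Fin n) ℝ) :
    frobInner A A = frobNorm A ^ 2 := by
  rw [frobInner_eq, frobNorm_eq, real_inner_self_eq_norm_sq]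

/-- Smoothness descent lemma. -/
lemma descent {m n : ℕ} (L : Matrix (Fin m) (Fin n) ℝ → ℝ)
    (gradL : Matrix (Fin m) (Fin n) ℝ → Matrix (Fin m) (Fin n) ℝ)
    (M : ℝ)
    (hgrad : ∀ (W Δ : Matrix (Fin m) (Fin n) ℝ),
      HasDerivAt (fun t : ℝ => L (W + t • Δ)) (frobInner (gradL W) Δ) 0)
    (hsmooth : ∀ W W' : Matrix (Fin m) (Fin n) ℝ,
      frobNorm (gradL W - gradL W') ≤ M * frobNorm (W - W'))
    (W Δ : Matrix (Fin m) (Fin n) ℝ) :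
    L (W + Δ) ≤ L W + frobInner (gradL W) Δ + M / 2 * frobNorm Δ ^ 2 := by
  set c1 := frobInner (gradL W) Δ with hc1
  set c2 := M / 2 * frobNorm Δ ^ 2 with hc2
  set φ : ℝ → ℝ := fun s => L (W + s • Δ) with hφdef
  have hφ : ∀ s : ℝ, HasDerivAt φ (frobInner (gradL (W + s • Δ)) Δ) s := by
    intro s
    have h0 := hgrad (W + s • Δ) Δ
    have heq : (fun t : ℝ => L (W + s • Δ + t • Δ)) = fun t => φ (s + t) := by
      funext t
      simp only [hφdef, add_smul, add_assoc]
    rw [heq] at h0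
    have h1 : HasDerivAt (fun u : ℝ => u - s) 1 s := by
      simpa using (hasDerivAt_id s).sub_const s
    have h2 : HasDerivAt ((fun t => φ (s + t)) ∘ (fun u : ℝ => u - s))
        (frobInner (gradL (W + s • Δ)) Δ * 1) s := by
      apply HasDerivAt.comp
      · simpa using h0
      · exact h1
    have heq2 : ((fun t => φ (s + t)) ∘ (fun u : ℝ => u - s)) = φ := by
      funext u; simp [Function.comp]
    rw [heq2] at h2
    simpa using h2
  set u : ℝ → ℝ := fun s => φ s - (L W + s * c1 + s ^ 2 * c2) with hudef
  have hu : ∀ s : ℝ, HasDerivAt u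
      (frobInner (gradL (W + s • Δ)) Δ - (c1 + 2 * s * c2)) s := by
    intro s
    have ha : HasDerivAt (fun s : ℝ => s * c1) c1 s := by
      simpa using (hasDerivAt_id s).mul_const c1
    have hb : HasDerivAt (fun s : ℝ => s ^ 2 * c2) (2 * s * c2) s := by
      have := (hasDerivAt_pow 2 s).mul_const c2
      simpa [pow_one, mul_comm, mul_assoc, mul_left_comm] using this
    have hc := ((hasDerivAt_const s (L W)).add ha).add hb
    rw [zero_add] at hc
    exact (hφ s).sub hc
  have hder : ∀ s ∈ Set.Ioo (0:ℝ) 1,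
      frobInner (gradL (W + s • Δ)) Δ - (c1 + 2 * s * c2) ≤ 0 := by
    intro s hs
    have hs0 : (0:ℝ) ≤ s := le_of_lt hs.1
    have key : frobInner (gradL (W + s • Δ)) Δ - c1
        = frobInner (gradL (W + s • Δ) - gradL W) Δ := by
      rw [frobInner_sub_left]
    have hb1 : frobInner (gradL (W + s • Δ) - gradL W) Δ
        ≤ frobNorm (gradL (W + s • Δ) - gradL W) * frobNorm Δ := frob_CS _ _
    have hb2 : frobNorm (gradL (W + s • Δ) - gradL W) ≤ M * (s * frobNorm Δ) := by
      have := hsmooth (W + s • Δ) W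
      have he : W + s • Δ - W = s • Δ := by abel
      rw [he, frobNorm_smul, abs_of_nonneg hs0] at this
      exact this
    have hΔn : 0 ≤ frobNorm Δ := frobNorm_nonneg Δ
    nlinarith [mul_le_mul_of_nonneg_right hb2 hΔn]
  have hcont : Continuous u := by
    have : Differentiable ℝ u := fun s => (hu s).differentiableAt
    exact this.continuous
  have hanti : AntitoneOn u (Set.Icc 0 1) := by
    apply antitoneOn_of_deriv_nonpos (convex_Icc 0 1) hcont.continuousOn
    · intro x hx
      exact ((hu x).differentiableAt).differentiableWithinAt
    · intro x hx
      rw [interior_Icc] at hx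
      rw [(hu x).deriv]
      exact hder x hx
  have h01 : (0:ℝ) ∈ Set.Icc (0:ℝ) 1 := by constructor <;> norm_num
  have h11 : (1:ℝ) ∈ Set.Icc (0:ℝ) 1 := by constructor <;> norm_num
  have := hanti h01 h11 (by norm_num)
  have hu0 : u 0 = 0 := by simp [hudef, hφdef]
  have hu1 : u 1 = L (W + Δ) - (L W + c1 + c2) := by simp [hudef, hφdef]
  rw [hu0, hu1] at this
  linarith

end PGLC

set_option maxHeartbeats 1600000 in
/-- Linear convergence in objective value of a perturbed gradient sequence
for a μ-strongly convex, M-smooth differentiable function. -/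
theorem perturbed_gradient_linear_convergence {m n : ℕ}
    (L : Matrix (Fin m) (Fin n) ℝ → ℝ)
    (gradL : Matrix (Fin m) (Fin n) ℝ → Matrix (Fin m) (Fin n) ℝ)
    -- `gradL` is the gradient of the differentiable function `L`
    (hgrad : ∀ (W Δ : Matrix (Fin m) (Fin n) ℝ),
      HasDerivAt (fun t : ℝ => L (W + t • Δ)) (frobInner (gradL W) Δ) 0)
    (μ M : ℝ) (hμ : 0 < μ)
    -- μ-strong convexity of `L`
    (hsc : ∀ W W' : Matrix (Fin m) (Fin n) ℝ,
      L W' + frobInner (gradL W') (W - W') + μ / 2 * frobNorm (W - W') ^ 2 ≤ L W)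
    -- M-smoothness of `L`
    (hsmooth : ∀ W W' : Matrix (Fin m) (Fin n) ℝ,
      frobNorm (gradL W - gradL W') ≤ M * frobNorm (W - W'))
    (Wstar : Matrix (Fin m) (Fin n) ℝ) (hmin : ∀ W, L Wstar ≤ L W)
    (ε : ℝ) (hε0 : 0 ≤ ε) (hε1 : ε < 1)
    (C₁ : ℝ) (hC₁ : 0 ≤ C₁) (h : ℝ) (hh : 0 < h)
    (hstep1 : C₁ * h ^ 2 + M / 2 * (2 * h + C₁ * h ^ 2) ^ 2 ≤ h * (1 - ε) / 2)
    (hstep2 : (1 - ε) * μ * h ≤ 1)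
    (W : ℕ → Matrix (Fin m) (Fin n) ℝ)
    (R E : ℕ → Matrix (Fin m) (Fin n) ℝ)
    (hupd : ∀ t, W (t + 1) = W t - h • gradL (W t) + h • R t + E t)
    (hR : ∀ t, frobInner (R t) (gradL (W t)) ≤ ε * frobNorm (gradL (W t)) ^ 2)
    (hRnorm : ∀ t, frobNorm (R t) ≤ frobNorm (gradL (W t)))
    (hE : ∀ t, frobNorm (E t) ≤ C₁ * h ^ 2 * frobNorm (gradL (W t))) :
    ∀ t : ℕ, L (W t) - L Wstar
      ≤ (1 - (1 - ε) * μ * h) ^ t * (L (W 0) - L Wstar) := by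
  by_cases hmn : m = 0 ∨ n = 0
  · have hsub : Subsingleton (Matrix (Fin m) (Fin n) ℝ) := by
      rcases hmn with h0 | h0 <;> subst h0
      · exact ⟨fun A B => Matrix.ext fun i _ => i.elim0⟩
      · exact ⟨fun A B => Matrix.ext fun _ j => j.elim0⟩
    intro t
    have h1 : W t = Wstar := Subsingleton.elim _ _
    have h2 : W 0 = Wstar := Subsingleton.elim _ _
    rw [h1, h2]
    simp
  · push_neg at hmn
    have hm : 0 < m := Nat.pos_of_ne_zero hmn.1
    have hn : 0 < n := Nat.pos_of_ne_zero hmn.2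
    -- M is nonnegative
    have hM : 0 ≤ M := by
      set A : Matrix (Fin m) (Fin n) ℝ := Matrix.of fun _ _ => (1:ℝ) with hA
      have h1 := hsmooth A 0
      have hpos : 0 < frobNorm (A - 0) := by
        rw [sub_zero, frobNorm]
        have hsum : (∑ i : Fin m, ∑ j : Fin n, (A i j) ^ 2) = (m : ℝ) * n := by
          simp [hA, Finset.sum_const, mul_comm]
        rw [hsum]
        have hmn' : (0:ℝ) < (m : ℝ) * n := by exact_mod_cast Nat.mul_pos hm hn
        exact Real.sqrt_pos.mpr hmn'
      have h2 : (0:ℝ) ≤ M * frobNorm (A - 0) :=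
        le_trans (PGLC.frobNorm_nonneg _) h1
      nlinarith [h2, hpos]
    -- Polyak–Łojasiewicz inequality
    have hPL : ∀ X, 2 * μ * (L X - L Wstar) ≤ frobNorm (gradL X) ^ 2 := by
      intro X
      have h1 := hsc Wstar X
      have hI : -(frobInner (gradL X) (Wstar - X))
          ≤ frobNorm (gradL X) * frobNorm (Wstar - X) := by
        have h2 : frobInner (gradL X) (-(Wstar - X))
            ≤ frobNorm (gradL X) * frobNorm (-(Wstar - X)) := PGLC.frob_CS _ _
        rw [PGLC.frobNorm_neg, PGLC.frobInner_neg_right] at h2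
        exact h2
      have ha0 : 0 ≤ frobNorm (gradL X) := PGLC.frobNorm_nonneg _
      have hb0 : 0 ≤ frobNorm (Wstar - X) := PGLC.frobNorm_nonneg _
      have h4 : L X - L Wstar ≤ frobNorm (gradL X) * frobNorm (Wstar - X)
          - μ / 2 * frobNorm (Wstar - X) ^ 2 := by linarith
      have h5 := mul_le_mul_of_nonneg_left h4 (by linarith : (0:ℝ) ≤ 2 * μ)
      nlinarith [sq_nonneg (frobNorm (gradL X) - μ * frobNorm (Wstar - X))]
    -- one-step contraction
    have hstep : ∀ t, L (W (t+1)) - L Wstar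
        ≤ (1 - (1 - ε) * μ * h) * (L (W t) - L Wstar) := by
      intro t
      have ha0 : 0 ≤ frobNorm (gradL (W t)) := PGLC.frobNorm_nonneg _
      have hWt : W t + (W (t+1) - W t) = W (t+1) := by abel
      have hΔeq : W (t+1) - W t = h • R t + E t - h • gradL (W t) := by
        rw [hupd t]; abel
      have hdesc := PGLC.descent L gradL M hgrad hsmooth (W t) (W (t+1) - W t)
      rw [hWt] at hdesc
      -- inner product bound
      have hI : frobInner (gradL (W t)) (W (t+1) - W t)
          ≤ (ε * h + C₁ * h ^ 2 - h) * frobNorm (gradL (W t)) ^ 2 := by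
        rw [hΔeq, PGLC.frobInner_sub_right, PGLC.frobInner_add_right,
          PGLC.frobInner_smul_right, PGLC.frobInner_smul_right, PGLC.frobInner_self]
        have h1 : frobInner (gradL (W t)) (R t) ≤ ε * frobNorm (gradL (W t)) ^ 2 := by
          rw [PGLC.frobInner_comm]; exact hR t
        have h2 : frobInner (gradL (W t)) (E t)
            ≤ frobNorm (gradL (W t)) * (C₁ * h ^ 2 * frobNorm (gradL (W t))) :=
          le_trans (PGLC.frob_CS _ _) (mul_le_mul_of_nonneg_left (hE t) ha0)
        nlinarith [mul_le_mul_of_nonneg_left h1 hh.le]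
      -- norm bound
      have hN : frobNorm (W (t+1) - W t) ≤ (2 * h + C₁ * h ^ 2) * frobNorm (gradL (W t)) := by
        rw [hΔeq, sub_eq_add_neg]
        have t1 : frobNorm (h • R t + E t + -(h • gradL (W t)))
            ≤ frobNorm (h • R t + E t) + frobNorm (-(h • gradL (W t))) :=
          PGLC.frobNorm_add_le _ _
        have t2 : frobNorm (h • R t + E t) ≤ frobNorm (h • R t) + frobNorm (E t) :=
          PGLC.frobNorm_add_le _ _
        rw [PGLC.frobNorm_neg] at t1
        rw [PGLC.frobNorm_smul, abs_of_nonneg hh.le] at t1 t2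
        have t3 := hRnorm t
        have t4 := hE t
        have t5 : h * frobNorm (R t) ≤ h * frobNorm (gradL (W t)) :=
          mul_le_mul_of_nonneg_left t3 hh.le
        nlinarith
      have hN2 : frobNorm (W (t+1) - W t) ^ 2
          ≤ ((2 * h + C₁ * h ^ 2) * frobNorm (gradL (W t))) ^ 2 :=
        pow_le_pow_left₀ (PGLC.frobNorm_nonneg _) hN 2
      have hMs : M / 2 * frobNorm (W (t+1) - W t) ^ 2
          ≤ M / 2 * ((2 * h + C₁ * h ^ 2) * frobNorm (gradL (W t))) ^ 2 :=
        mul_le_mul_of_nonneg_left hN2 (by linarith)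
      have hPLt := hPL (W t)
      have hD0 : 0 ≤ L (W t) - L Wstar := by linarith [hmin (W t)]
      have hstep1' := mul_le_mul_of_nonneg_right hstep1 (sq_nonneg (frobNorm (gradL (W t))))
      have hfin := mul_le_mul_of_nonneg_left hPLt
        (div_nonneg (mul_nonneg hh.le (by linarith)) (by norm_num) : (0:ℝ) ≤ h * (1 - ε) / 2)
      set a := frobNorm (gradL (W t)) with hadef
      set Nd := frobNorm (W (t+1) - W t) with hNdef
      set l1 := L (W (t+1)) with hl1
      set l0 := L (W t) with hl0
      set ls := L Wstar with hls
      have hb1 : l1 - ls ≤ (l0 - ls) - h * (1 - ε) / 2 * a ^ 2 := by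
        linarith [hdesc, hI, hMs, hstep1']
      nlinarith [hb1, hfin]
    intro t
    induction t with
    | zero => simp
    | succ t ih =>
      have h1 := hstep t
      have hfac : 0 ≤ 1 - (1 - ε) * μ * h := by linarith
      calc L (W (t+1)) - L Wstar
          ≤ (1 - (1 - ε) * μ * h) * (L (W t) - L Wstar) := h1
        _ ≤ (1 - (1 - ε) * μ * h) * ((1 - (1 - ε) * μ * h) ^ t * (L (W 0) - L Wstar)) :=
            mul_le_mul_of_nonneg_left ih hfac
        _ = (1 - (1 - ε) * μ * h) ^ (t+1) * (L (W 0) - L Wstar) := by ring
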